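/- Let p and q be coprime integers with p > q > 1 and p > 2q−1. Set ω = ρ(maxword(0)) and γ = ρ(q·minword(1)), where q·minword(1) is the ω-word with first digit q followed by the digits of minword(1). Then for every n ∈ ℕ it holds 0 < γ ≤ span(n) ≤ ω. -/

import Mathlib

/-- `w` labels a branch of the base-p/q automaton with digit set `E` from state `n`:
there are states `s 0 = n, s 1, s 2, …` with `q·s(k+1) = p·s k + w k` and `w k ∈ E`. -/
def IsBranch (p q : ℕ) (E : Set ℤ) (n : ℕ) (w : ℕ → ℤ) : Prop :=
  ∃ s : ℕ → ℕ, s 0 = n ∧ ∀ k : ℕ, (q : ℤ) * s (k + 1) = p * s k + w k ∧ w k ∈ E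

/-- `u` (a word of length `ℓ`) labels a path from `n` to `m` in the base-p/q automaton
with digit set `E`. -/
def IsPath (p q : ℕ) (E : Set ℤ) (n m ℓ : ℕ) (u : ℕ → ℤ) : Prop :=
  ∃ s : ℕ → ℕ, s 0 = n ∧ s ℓ = m ∧
    ∀ k < ℓ, (q : ℤ) * s (k + 1) = p * s k + u k ∧ u k ∈ E

/-- The canonical digit alphabet `A_p = {0, 1, …, p−1}`. -/
def Ap (p : ℕ) : Set ℤ := Set.Icc 0 ((p : ℤ) - 1)

/-- The lower alphabet `{0, 1, …, q−1}`. -/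
def LowAlph (q : ℕ) : Set ℤ := Set.Icc 0 ((q : ℤ) - 1)

/-- The upper alphabet `{p−q, …, p−1}`. -/
def UpAlph (p q : ℕ) : Set ℤ := Set.Icc ((p : ℤ) - q) ((p : ℤ) - 1)

/-- The alphabet `D = {p−2q+1, …, p−1}` of the automaton `S_{p/q}`. -/
def Dalph (p q : ℕ) : Set ℤ := Set.Icc ((p : ℤ) - 2 * q + 1) ((p : ℤ) - 1)

/-- Evaluation after the radix point: `ρ(w) = Σ_{i≥1} (w_i/q)·(q/p)^i`
(here `w k` is the `(k+1)`-st digit). -/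
noncomputable def rho (p q : ℕ) (w : ℕ → ℤ) : ℝ :=
  ∑' i : ℕ, ((w i : ℝ) / q) * ((q : ℝ) / p) ^ (i + 1)

open Filter Finset

private lemma int_nonneg_of {q x : ℤ} (hq : 0 < q) (h : -q < q * x) : 0 ≤ x := by
  by_contra hx
  push_neg at hx
  have h1 : x ≤ -1 := by omega
  have h2 : q * x ≤ q * (-1) := mul_le_mul_of_nonneg_left h1 (le_of_lt hq)
  have : q * (-1) = -q := by ring
  omega

private lemma aux_sum (p q : ℕ) (hq : 0 < q) (hp : 0 < p) (s w : ℕ → ℤ)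
    (hrec : ∀ k, (q:ℤ) * s (k+1) = (p:ℤ) * s k + w k) (N : ℕ) :
    ∑ k ∈ Finset.range N, ((w k : ℝ)/q) * ((q:ℝ)/p)^(k+1)
      = (s N : ℝ) * ((q:ℝ)/p)^N - (s 0 : ℝ) := by
  induction N with
  | zero => simp
  | succ N ih =>
    rw [Finset.sum_range_succ, ih]
    have hq' : (q:ℝ) ≠ 0 := by positivity
    have hp' : (p:ℝ) ≠ 0 := by positivity
    have h' : (q:ℝ) * s (N+1) = p * s N + w N := by exact_mod_cast hrec N
    have hw : (w N : ℝ) = q * s (N+1) - p * s N := by linarith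
    rw [hw]
    field_simp
    have hp'' : (p:ℝ) * (p:ℝ)⁻¹ = 1 := mul_inv_cancel₀ hp'
    linear_combination (-(q:ℝ) * (q:ℝ)^N * (s N : ℝ) * ((p:ℝ)⁻¹)^N) * hp''

private lemma aux_summable (p q : ℕ) (hq : 0 < q) (hpq : q < p) (w : ℕ → ℤ)
    (hbd : ∀ k, |(w k : ℝ)| ≤ p) :
    Summable (fun i => ((w i : ℝ)/q) * ((q:ℝ)/p)^(i+1)) := by
  have hp : 0 < p := lt_trans hq hpq
  have hr0 : (0:ℝ) ≤ (q:ℝ)/p := by positivity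
  have hr1 : (q:ℝ)/p < 1 := by
    rw [div_lt_one (by positivity)]
    exact_mod_cast hpq
  have hgeo : Summable (fun i : ℕ => ((p:ℝ)/q * ((q:ℝ)/p)) * ((q:ℝ)/p)^i) :=
    (summable_geometric_of_lt_one hr0 hr1).mul_left _
  apply Summable.of_norm_bounded hgeo
  intro i
  have hnorm : ‖((w i:ℝ)/q) * ((q:ℝ)/p)^(i+1)‖
      = |(w i:ℝ)|/q * ((q:ℝ)/p)^(i+1) := by
    rw [Real.norm_eq_abs, abs_mul, abs_div, abs_pow, abs_of_nonneg hr0, Nat.abs_cast]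
  rw [hnorm, pow_succ']
  have h1 : |(w i:ℝ)|/q * ((q:ℝ)/p * ((q:ℝ)/p)^i)
      = (|(w i:ℝ)|/q * ((q:ℝ)/p)) * ((q:ℝ)/p)^i := by ring
  rw [h1]
  gcongr
  exact hbd i

private lemma aux_tendsto (p q : ℕ) (hq : 0 < q) (hpq : q < p) (s w : ℕ → ℤ)
    (hrec : ∀ k, (q:ℤ) * s (k+1) = (p:ℤ) * s k + w k)
    (hbd : ∀ k, |(w k : ℝ)| ≤ p) :
    Tendsto (fun N => (s N : ℝ) * ((q:ℝ)/p)^N) atTop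
      (nhds (rho p q w + (s 0 : ℝ))) := by
  have hp : 0 < p := lt_trans hq hpq
  have hsum := aux_summable p q hq hpq w hbd
  have h1 : Tendsto (fun N => ∑ k ∈ Finset.range N, ((w k:ℝ)/q) * ((q:ℝ)/p)^(k+1))
      atTop (nhds (rho p q w)) := hsum.hasSum.tendsto_sum_nat
  have h2 := h1.add_const ((s 0 : ℝ))
  refine h2.congr (fun N => ?_)
  rw [aux_sum p q hq hp s w hrec N]
  ring

theorem stmt15 (p q : ℕ) (hco : Nat.Coprime p q) (hq : 1 < q) (hpq : q < p)
    (hbig : 2 * q - 1 < p)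
    (mw mx : ℕ → ℕ → ℤ)
    (hmw : ∀ n, IsBranch p q (LowAlph q) n (mw n))
    (hmx : ∀ n, IsBranch p q (UpAlph p q) n (mx n)) :
    ∀ n : ℕ,
      0 < rho p q (fun k => if k = 0 then (q : ℤ) else mw 1 (k - 1)) ∧
      rho p q (fun k => if k = 0 then (q : ℤ) else mw 1 (k - 1))
        ≤ rho p q (mx n) - rho p q (mw n) ∧
      rho p q (mx n) - rho p q (mw n) ≤ rho p q (mx 0) := by
  intro n
  have hq0 : 0 < q := lt_trans one_pos hq
  have hp0 : 0 < p := lt_trans hq0 hpq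
  have hqZ : (0:ℤ) < q := by exact_mod_cast hq0
  have hqR : (0:ℝ) < q := by exact_mod_cast hq0
  have hpR : (0:ℝ) < p := by exact_mod_cast hp0
  have hr0 : (0:ℝ) ≤ (q:ℝ)/p := by positivity
  obtain ⟨a, ha0, ha⟩ := hmw n
  obtain ⟨b, hb0, hb⟩ := hmx n
  obtain ⟨c, hc0, hc⟩ := hmw 1
  obtain ⟨e, he0, he⟩ := hmx 0
  have hlowa : ∀ k, (0:ℤ) ≤ mw n k ∧ mw n k ≤ (q:ℤ) - 1 :=
    fun k => Set.mem_Icc.mp (ha k).2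
  have hlowc : ∀ k, (0:ℤ) ≤ mw 1 k ∧ mw 1 k ≤ (q:ℤ) - 1 :=
    fun k => Set.mem_Icc.mp (hc k).2
  have hupb : ∀ k, (p:ℤ) - q ≤ mx n k ∧ mx n k ≤ (p:ℤ) - 1 :=
    fun k => Set.mem_Icc.mp (hb k).2
  have hupe : ∀ k, (p:ℤ) - q ≤ mx 0 k ∧ mx 0 k ≤ (p:ℤ) - 1 :=
    fun k => Set.mem_Icc.mp (he k).2
  have hd1 : ∀ k, (1:ℤ) ≤ mx n k - mw n k := by
    intro k
    have h1 := (hupb k).1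
    have h2 := (hlowa k).2
    omega
  have hdp : ∀ k, mx n k - mw n k ≤ (p:ℤ) - 1 := by
    intro k
    have h1 := (hupb k).2
    have h2 := (hlowa k).1
    omega
  set t : ℕ → ℤ := fun k => (b k : ℤ) - (a k : ℤ) with htdef
  set u : ℕ → ℤ := fun k => if k = 0 then 0 else (c (k-1) : ℤ) with hudef
  set w' : ℕ → ℤ := fun k => if k = 0 then (q:ℤ) else mw 1 (k-1) with hwdef
  set d : ℕ → ℤ := fun k => mx n k - mw n k with hddef
  have hwub : ∀ k, w' k ≤ (q:ℤ) := by
    intro k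
    simp only [hwdef]
    split
    · exact le_rfl
    · have := (hlowc (k-1)).2
      omega
  have hwlb : ∀ k, (0:ℤ) ≤ w' k := by
    intro k
    simp only [hwdef]
    split
    · omega
    · exact (hlowc _).1
  have htrec : ∀ k, (q:ℤ) * t (k+1) = (p:ℤ) * t k + d k := by
    intro k
    simp only [htdef, hddef]
    rw [mul_sub, mul_sub]
    have h1 := (hb k).1
    have h2 := (ha k).1
    linarith
  have hurec : ∀ k, (q:ℤ) * u (k+1) = (p:ℤ) * u k + w' k := by
    intro k
    cases k with
    | zero => simp [hudef, hwdef, hc0]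
    | succ j =>
      simp only [hudef, hwdef, Nat.succ_ne_zero, if_false, Nat.add_sub_cancel]
      simpa using (hc j).1
  have herec : ∀ k, (q:ℤ) * (e (k+1) : ℤ) = (p:ℤ) * (e k : ℤ) + mx 0 k :=
    fun k => (he k).1
  have ht0 : t 0 = 0 := by simp [htdef, ha0, hb0]
  -- comparison 1 : u ≤ t
  have hut : ∀ k, u k ≤ t k := by
    intro k
    induction k with
    | zero => simp [hudef, ht0]
    | succ j ih =>
      cases j with
      | zero =>
        have h1 := htrec 0
        rw [ht0] at h1
        have hd0 := hd1 0
        have h2 : (0:ℤ) ≤ t 1 - 1 := by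
          apply int_nonneg_of hqZ
          have hkey : (q:ℤ) * (t 1 - 1) = d 0 - q := by linear_combination h1
          rw [hkey]
          have hd0' : (1:ℤ) ≤ d 0 := by simp only [hddef]; exact hd1 0
          linarith
        have h3 : u 1 = 1 := by simp [hudef, hc0]
        show u 1 ≤ t 1
        omega
      | succ i =>
        have h1 := htrec (i+1)
        have h2 := hurec (i+1)
        have hw : w' (i+1) ≤ (q:ℤ) - 1 := by
          simp only [hwdef, Nat.succ_ne_zero, if_false, Nat.add_sub_cancel]
          exact (hlowc i).2
        have hdd := hd1 (i+1)
        have hpt : (0:ℤ) ≤ (p:ℤ) * (t (i+1) - u (i+1)) :=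
          mul_nonneg (by positivity) (by omega)
        have hkey : (q:ℤ) * (t (i+1+1) - u (i+1+1))
            = (p:ℤ) * (t (i+1) - u (i+1)) + (d (i+1) - w' (i+1)) := by
          linear_combination h1 - h2
        have hdd' : (1:ℤ) ≤ d (i+1) := by simp only [hddef]; exact hd1 (i+1)
        have h3 : (0:ℤ) ≤ t (i+1+1) - u (i+1+1) := by
          apply int_nonneg_of hqZ
          rw [hkey]
          linarith
        linarith
  -- comparison 2 : t ≤ e
  have hte : ∀ k, t k ≤ (e k : ℤ) := by
    intro k
    induction k with
    | zero => simp [ht0, he0]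
    | succ j ih =>
      have h1 := htrec j
      have h2 := herec j
      have hm := (hupe j).1
      have hdd := hdp j
      have hpt : (0:ℤ) ≤ (p:ℤ) * ((e j : ℤ) - t j) :=
        mul_nonneg (by positivity) (by omega)
      have hkey : (q:ℤ) * ((e (j+1) : ℤ) - t (j+1))
          = (p:ℤ) * ((e j : ℤ) - t j) + (mx 0 j - d j) := by
        linear_combination h2 - h1
      have hdd' : d j ≤ (p:ℤ) - 1 := by simp only [hddef]; exact hdp j
      have h3 : (0:ℤ) ≤ (e (j+1) : ℤ) - t (j+1) := by
        apply int_nonneg_of hqZ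
        rw [hkey]
        linarith
      linarith
  -- digit bounds as real absolute values
  have habs : ∀ x : ℤ, (0:ℤ) ≤ x → x ≤ (p:ℤ) → |(x:ℝ)| ≤ (p:ℝ) := by
    intro x h1 h2
    rw [abs_of_nonneg (by exact_mod_cast h1)]
    exact_mod_cast h2
  have hbda : ∀ k, |((mw n k : ℤ) : ℝ)| ≤ (p:ℝ) := by
    intro k
    exact habs _ (hlowa k).1 (by have := (hlowa k).2; omega)
  have hbdb : ∀ k, |((mx n k : ℤ) : ℝ)| ≤ (p:ℝ) := by
    intro k
    exact habs _ (by have := (hupb k).1; omega) (by have := (hupb k).2; omega)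
  have hbde : ∀ k, |((mx 0 k : ℤ) : ℝ)| ≤ (p:ℝ) := by
    intro k
    exact habs _ (by have := (hupe k).1; omega) (by have := (hupe k).2; omega)
  have hbdd : ∀ k, |((d k : ℤ) : ℝ)| ≤ (p:ℝ) := by
    intro k
    exact habs _ (by have := hd1 k; simp only [hddef] at this ⊢; omega)
      (by have := hdp k; simp only [hddef] at this ⊢; omega)
  have hbdw : ∀ k, |((w' k : ℤ) : ℝ)| ≤ (p:ℝ) := by
    intro k
    exact habs _ (hwlb k) (by have := hwub k; omega)
  -- tendsto facts
  have T_a := aux_tendsto p q hq0 hpq (fun k => (a k : ℤ)) (mw n)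
    (fun k => (ha k).1) hbda
  have T_b := aux_tendsto p q hq0 hpq (fun k => (b k : ℤ)) (mx n)
    (fun k => (hb k).1) hbdb
  have T_e := aux_tendsto p q hq0 hpq (fun k => (e k : ℤ)) (mx 0)
    (fun k => (he k).1) hbde
  have T_u := aux_tendsto p q hq0 hpq u w' hurec hbdw
  simp only [ha0] at T_a
  simp only [hb0] at T_b
  simp only [he0, Int.cast_zero, Nat.cast_zero, add_zero] at T_e
  have hu0 : u 0 = 0 := by simp [hudef]
  rw [hu0] at T_u
  simp only [Int.cast_zero, add_zero] at T_u
  have T_t : Tendsto (fun N => ((t N : ℤ) : ℝ) * ((q:ℝ)/p)^N) atTop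
      (nhds (rho p q (mx n) - rho p q (mw n))) := by
    have h := T_b.sub T_a
    have heq : (rho p q (mx n) + ((n:ℤ):ℝ)) - (rho p q (mw n) + ((n:ℤ):ℝ))
        = rho p q (mx n) - rho p q (mw n) := by ring
    rw [heq] at h
    refine h.congr (fun N => ?_)
    simp only [htdef]
    push_cast
    ring
  refine ⟨?_, ?_, ?_⟩
  · -- positivity of γ
    have hsumw := aux_summable p q hq0 hpq w' hbdw
    have : 0 < ∑' i : ℕ, ((w' i : ℝ)/q) * ((q:ℝ)/p)^(i+1) := by
      apply Summable.tsum_pos hsumw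
      · intro i
        have h1 : (0:ℝ) ≤ (w' i : ℝ) := by exact_mod_cast hwlb i
        positivity
      · show (0:ℝ) < ((w' 0 : ℝ)/q) * ((q:ℝ)/p)^(0+1)
        have hw0 : w' 0 = (q:ℤ) := by simp [hwdef]
        rw [hw0]
        push_cast
        apply mul_pos (div_pos hqR hqR)
        positivity
    exact this
  · -- γ ≤ span
    refine le_of_tendsto_of_tendsto' T_u T_t (fun N => ?_)
    have : ((u N : ℤ) : ℝ) ≤ ((t N : ℤ) : ℝ) := by exact_mod_cast hut N
    exact mul_le_mul_of_nonneg_right this (pow_nonneg hr0 N)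
  · -- span ≤ ω
    refine le_of_tendsto_of_tendsto' T_t T_e (fun N => ?_)
    have : ((t N : ℤ) : ℝ) ≤ ((e N : ℤ) : ℝ) := by exact_mod_cast hte N
    exact mul_le_mul_of_nonneg_right this (pow_nonneg hr0 N)
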